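/- Let K be a field and E an arbitrary directed graph whose Leavitt path algebra is L = L_K(E). Let A be the ideal of L generated by the set X of all acyclic vertices (vertices v such that the tree T_E(v) contains no cycle) and let N be the ideal generated by the set Y of vertices lying on cycles without exits. Then A ∩ N = 0. -/

import Mathlib

/-- A directed graph: vertices, edges, source and target (range) maps. -/
structure DGraph where
  V : Type
  E : Type
  src : E → V
  tgt : E → V

namespace DGraph

/-- There is a (possibly empty) directed path from `u` to `w`. -/
def Reaches (G : DGraph) (u w : G.V) : Prop :=
  Relation.ReflTransGen (fun a b => ∃ e : G.E, G.src e = a ∧ G.tgt e = b) u w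

/-- A nonempty list of composable edges, closed, not passing through any vertex twice. -/
def IsCycle (G : DGraph) (p : List G.E) : Prop :=
  p ≠ [] ∧ List.Chain' (fun e f => G.tgt e = G.src f) p ∧
    p.getLast?.map G.tgt = p.head?.map G.src ∧ (p.map G.src).Nodup

/-- The preorder on cycles: `c ≥ c'` iff some vertex of `c` reaches some vertex of `c'`. -/
def CycleGe (G : DGraph) (c c' : List G.E) : Prop :=
  ∃ u w : G.V, u ∈ c.map G.src ∧ w ∈ c'.map G.src ∧ G.Reaches u w

/-- Two cycles are the same cycle iff one is a rotation of the other. -/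
def IsRotation (G : DGraph) (c c' : List G.E) : Prop :=
  ∃ n : ℕ, c' = c.rotate n

/-- An infinite path, as a coherent sequence of edges. -/
def IsInfPath (G : DGraph) (p : ℕ → G.E) : Prop :=
  ∀ n : ℕ, G.tgt (p n) = G.src (p (n + 1))

/-- A rational infinite path: `g g g ⋯` for a (finite, nonempty, closed) path `g`. -/
def IsRational (G : DGraph) (q : ℕ → G.E) : Prop :=
  ∃ (g : List G.E) (hg : g ≠ []),
    List.Chain' (fun e f => G.tgt e = G.src f) g ∧
    g.getLast?.map G.tgt = g.head?.map G.src ∧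
    ∀ k : ℕ, q k = g.get ⟨k % g.length, Nat.mod_lt _ (List.length_pos_iff.mpr hg)⟩

/-- Tail equivalence of infinite paths. -/
def TailEquiv (G : DGraph) (p q : ℕ → G.E) : Prop :=
  ∃ m n : ℕ, ∀ k : ℕ, p (m + k) = q (n + k)

end DGraph

/-- Generators of the Leavitt path algebra: vertices, edges (real), ghost edges. -/
inductive LPAGen (G : DGraph) : Type
  | vertex : G.V → LPAGen G
  | edge : G.E → LPAGen G
  | ghost : G.E → LPAGen G

open Classical in
/-- The defining relations of the Leavitt path algebra `L_K(E)`: the vertices are pairwise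
orthogonal idempotents, `s(e)e = e = e r(e)`, `r(e)e* = e* = e* s(e)`, the (CK-1)
relations `e* f = δ_{e,f} r(e)`, and the (CK-2) relations `v = ∑_{s(e)=v} e e*` for every
regular vertex `v`. -/
inductive LPARel (K : Type) [Field K] (G : DGraph) :
    FreeAlgebra K (LPAGen G) → FreeAlgebra K (LPAGen G) → Prop
  | vtx (u v : G.V) :
      LPARel K G (FreeAlgebra.ι K (LPAGen.vertex u) * FreeAlgebra.ι K (LPAGen.vertex v))
        (if u = v then FreeAlgebra.ι K (LPAGen.vertex u) else 0)
  | src_edge (e : G.E) :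
      LPARel K G (FreeAlgebra.ι K (LPAGen.vertex (G.src e)) * FreeAlgebra.ι K (LPAGen.edge e))
        (FreeAlgebra.ι K (LPAGen.edge e))
  | edge_tgt (e : G.E) :
      LPARel K G (FreeAlgebra.ι K (LPAGen.edge e) * FreeAlgebra.ι K (LPAGen.vertex (G.tgt e)))
        (FreeAlgebra.ι K (LPAGen.edge e))
  | tgt_ghost (e : G.E) :
      LPARel K G (FreeAlgebra.ι K (LPAGen.vertex (G.tgt e)) * FreeAlgebra.ι K (LPAGen.ghost e))
        (FreeAlgebra.ι K (LPAGen.ghost e))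
  | ghost_src (e : G.E) :
      LPARel K G (FreeAlgebra.ι K (LPAGen.ghost e) * FreeAlgebra.ι K (LPAGen.vertex (G.src e)))
        (FreeAlgebra.ι K (LPAGen.ghost e))
  | ck1 (e f : G.E) :
      LPARel K G (FreeAlgebra.ι K (LPAGen.ghost e) * FreeAlgebra.ι K (LPAGen.edge f))
        (if e = f then FreeAlgebra.ι K (LPAGen.vertex (G.tgt e)) else 0)
  | ck2 (v : G.V) (hfin : {e : G.E | G.src e = v}.Finite)
      (hne : {e : G.E | G.src e = v}.Nonempty) :
      LPARel K G (FreeAlgebra.ι K (LPAGen.vertex v))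
        (∑ e ∈ hfin.toFinset,
          FreeAlgebra.ι K (LPAGen.edge e) * FreeAlgebra.ι K (LPAGen.ghost e))

/-- The Leavitt path algebra of the graph `G` over the field `K`. -/
abbrev LPA (K : Type) [Field K] (G : DGraph) := RingQuot (LPARel K G)

/-- The image of a vertex `v` in the Leavitt path algebra. -/
noncomputable def lpaVtx (K : Type) [Field K] (G : DGraph) (v : G.V) : LPA K G :=
  RingQuot.mkRingHom (LPARel K G) (FreeAlgebra.ι K (LPAGen.vertex v))

/-- A vertex is acyclic if its tree `T_E(v)` contains no cycle. -/
def DGraph.IsAcyclicVertex (G : DGraph) (v : G.V) : Prop :=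
  ¬ ∃ (c : List G.E) (w : G.V), G.IsCycle c ∧ w ∈ c.map G.src ∧ G.Reaches v w

/-- A cycle has no exits. -/
def DGraph.NoExit (G : DGraph) (c : List G.E) : Prop :=
  ∀ e : G.E, G.src e ∈ c.map G.src → e ∈ c
section Aux
open scoped Classical
open DGraph

variable {K : Type} [Field K] {G : DGraph}

/-- `Comp a l b` : `l` is a composable list of edges from `a` to `b`. -/
def Comp (G : DGraph) : G.V → List G.E → G.V → Prop
  | v, [], w => v = w
  | v, e :: l, w => v = G.src e ∧ Comp G (G.tgt e) l w

lemma comp_append {a b c : G.V} {l l' : List G.E} (h : Comp G a l b) (h' : Comp G b l' c) :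
    Comp G a (l ++ l') c := by
  induction l generalizing a with
  | nil => cases h; simpa using h'
  | cons e l ih => exact ⟨h.1, ih h.2⟩

noncomputable def vx (G : DGraph) (K : Type) [Field K] (v : G.V) : LPA K G := lpaVtx K G v

noncomputable def ed (G : DGraph) (K : Type) [Field K] (e : G.E) : LPA K G :=
  RingQuot.mkRingHom (LPARel K G) (FreeAlgebra.ι K (LPAGen.edge e))

noncomputable def gh (G : DGraph) (K : Type) [Field K] (e : G.E) : LPA K G :=
  RingQuot.mkRingHom (LPARel K G) (FreeAlgebra.ι K (LPAGen.ghost e))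

lemma r1 (u v : G.V) : vx G K u * vx G K v = if u = v then vx G K u else 0 := by
  have h := RingQuot.mkRingHom_rel (LPARel.vtx (K := K) (G := G) u v)
  rw [map_mul] at h
  by_cases huv : u = v
  · rw [if_pos huv] at h ⊢; exact h
  · rw [if_neg huv] at h ⊢; exact h.trans (map_zero _)

lemma r2 (e : G.E) : vx G K (G.src e) * ed G K e = ed G K e := by
  have h := RingQuot.mkRingHom_rel (LPARel.src_edge (K := K) (G := G) e)
  rw [map_mul] at h; exact h

lemma r3 (e : G.E) : ed G K e * vx G K (G.tgt e) = ed G K e := by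
  have h := RingQuot.mkRingHom_rel (LPARel.edge_tgt (K := K) (G := G) e)
  rw [map_mul] at h; exact h

lemma r4 (e : G.E) : vx G K (G.tgt e) * gh G K e = gh G K e := by
  have h := RingQuot.mkRingHom_rel (LPARel.tgt_ghost (K := K) (G := G) e)
  rw [map_mul] at h; exact h

lemma r5 (e : G.E) : gh G K e * vx G K (G.src e) = gh G K e := by
  have h := RingQuot.mkRingHom_rel (LPARel.ghost_src (K := K) (G := G) e)
  rw [map_mul] at h; exact h

lemma r6 (e f : G.E) : gh G K e * ed G K f = if e = f then vx G K (G.tgt e) else 0 := by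
  have h := RingQuot.mkRingHom_rel (LPARel.ck1 (K := K) (G := G) e f)
  rw [map_mul] at h
  by_cases hef : e = f
  · rw [if_pos hef] at h ⊢; exact h
  · rw [if_neg hef] at h ⊢; exact h.trans (map_zero _)

end Aux
section Aux2
open scoped Classical
open DGraph

variable {K : Type} [Field K] {G : DGraph}

lemma comp_reaches' {a b : G.V} : ∀ {l : List G.E}, Comp G a l b → G.Reaches a b := by
  intro l
  induction l generalizing a with
  | nil => rintro (rfl : a = b); exact Relation.ReflTransGen.refl
  | cons e l ih =>
    rintro ⟨rfl, h⟩
    exact Relation.ReflTransGen.head ⟨e, rfl, rfl⟩ (ih h)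

lemma vx_ed (u : G.V) (e : G.E) :
    vx G K u * ed G K e = if u = G.src e then ed G K e else 0 := by
  by_cases h : u = G.src e
  · subst h; rw [if_pos rfl]; exact r2 e
  · rw [if_neg h, ← r2 e, ← mul_assoc, r1, if_neg h, zero_mul]

lemma ed_vx (e : G.E) (u : G.V) :
    ed G K e * vx G K u = if u = G.tgt e then ed G K e else 0 := by
  by_cases h : u = G.tgt e
  · subst h; rw [if_pos rfl]; exact r3 e
  · rw [if_neg h, ← r3 e, mul_assoc, r1, if_neg (fun hh => h hh.symm), mul_zero]

lemma vx_gh (u : G.V) (e : G.E) :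
    vx G K u * gh G K e = if u = G.tgt e then gh G K e else 0 := by
  by_cases h : u = G.tgt e
  · subst h; rw [if_pos rfl]; exact r4 e
  · rw [if_neg h, ← r4 e, ← mul_assoc, r1, if_neg h, zero_mul]

lemma gh_vx (e : G.E) (u : G.V) :
    gh G K e * vx G K u = if u = G.src e then gh G K e else 0 := by
  by_cases h : u = G.src e
  · subst h; rw [if_pos rfl]; exact r5 e
  · rw [if_neg h, ← r5 e, mul_assoc, r1, if_neg (fun hh => h hh.symm), mul_zero]

noncomputable def pe (G : DGraph) (K : Type) [Field K] (l : List G.E) : LPA K G :=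
  (l.map (ed G K)).prod

noncomputable def pg (G : DGraph) (K : Type) [Field K] (l : List G.E) : LPA K G :=
  (l.reverse.map (gh G K)).prod

@[simp] lemma pe_nil : pe G K ([] : List G.E) = 1 := rfl
@[simp] lemma pg_nil : pg G K ([] : List G.E) = 1 := rfl

lemma pe_cons (e : G.E) (l : List G.E) : pe G K (e :: l) = ed G K e * pe G K l := by
  simp [pe]

lemma pg_cons (e : G.E) (l : List G.E) : pg G K (e :: l) = pg G K l * gh G K e := by
  simp [pg]

lemma pe_append (l l' : List G.E) : pe G K (l ++ l') = pe G K l * pe G K l' := by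
  simp [pe]

end Aux2
section Aux3
open scoped Classical
open DGraph

variable {K : Type} [Field K] {G : DGraph}

/-- Left absorb/kill: multiplying a sandwiched path monomial by a vertex on the left. -/
lemma vx_pe {a v : G.V} : ∀ {l : List G.E}, Comp G a l v → ∀ (u : G.V) (z : LPA K G),
    vx G K u * (pe G K l * (vx G K v * z)) = if u = a then pe G K l * (vx G K v * z) else 0 := by
  intro l
  induction l generalizing a with
  | nil =>
    intro h u z
    obtain rfl : a = v := h
    rw [pe_nil, one_mul, ← mul_assoc, r1]
    by_cases h : u = a
    · rw [if_pos h, if_pos h, h]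
    · rw [if_neg h, if_neg h, zero_mul]
  | cons e l ih =>
    rintro ⟨rfl, h⟩ u z
    rw [pe_cons, mul_assoc, ← mul_assoc (vx G K u), vx_ed]
    by_cases hu : u = G.src e
    · rw [if_pos hu, if_pos hu]
    · rw [if_neg hu, if_neg hu, zero_mul]

/-- Right absorb/kill. -/
lemma pg_vx {b v : G.V} : ∀ {l : List G.E}, Comp G b l v → ∀ (u : G.V),
    (vx G K v * pg G K l) * vx G K u = if u = b then vx G K v * pg G K l else 0 := by
  intro l
  induction l generalizing b with
  | nil =>
    intro h u
    obtain rfl : b = v := h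
    rw [pg_nil, mul_one, r1]
    by_cases h : u = b
    · rw [if_pos h, if_pos h.symm]
    · rw [if_neg h, if_neg (fun hh => h hh.symm)]
  | cons e l ih =>
    rintro ⟨rfl, h⟩ u
    rw [pg_cons, ← mul_assoc, mul_assoc _ (gh G K e), gh_vx]
    by_cases hu : u = G.src e
    · rw [if_pos hu, if_pos hu]
    · rw [if_neg hu, if_neg hu, mul_zero]

/-- collapse `⋯ e* ⬝ f ⋯` in the middle of a word. -/
lemma mid (X Y : LPA K G) (e f : G.E) :
    (X * gh G K e) * (ed G K f * Y) = if e = f then X * (vx G K (G.tgt e) * Y) else 0 := by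
  rw [mul_assoc, ← mul_assoc (gh G K e), r6]
  by_cases h : e = f
  · rw [if_pos h, if_pos h, ← mul_assoc, mul_assoc]
  · rw [if_neg h, if_neg h, zero_mul, mul_zero]

/-- collapse `⋯ e* ⬝ u ⋯` in the middle of a word. -/
lemma midvx (X Y : LPA K G) (e : G.E) (u : G.V) :
    (X * gh G K e) * (vx G K u * Y) = if u = G.src e then (X * gh G K e) * Y else 0 := by
  rw [mul_assoc, ← mul_assoc (gh G K e), gh_vx]
  by_cases h : u = G.src e
  · rw [if_pos h, if_pos h, ← mul_assoc, mul_assoc]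
  · rw [if_neg h, if_neg h, zero_mul, mul_zero]

/-- Ghost of a path absorbs the path: `β* (β τ w ⋯) = τ w ⋯` (sandwiched form). -/
lemma gp {u w : G.V} : ∀ {β : List G.E} {a : G.V}, Comp G a β u → ∀ {τ : List G.E},
    Comp G u τ w → ∀ z : LPA K G,
    (vx G K u * pg G K β) * (pe G K β * (pe G K τ * (vx G K w * z))) =
      pe G K τ * (vx G K w * z) := by
  intro β
  induction β with
  | nil =>
    intro a h τ hτ z
    obtain rfl : a = u := h
    rw [pg_nil, mul_one, pe_nil, one_mul, vx_pe hτ, if_pos rfl]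
  | cons e β ih =>
    rintro a ⟨rfl, h⟩ τ hτ z
    rw [pg_cons, pe_cons, ← mul_assoc (vx G K u), mul_assoc (ed G K e), mid, if_pos rfl]
    rw [show pe G K β * (pe G K τ * (vx G K w * z)) = pe G K (β ++ τ) * (vx G K w * z) by
      rw [pe_append, mul_assoc]]
    rw [vx_pe (comp_append h hτ), if_pos rfl]
    rw [show pe G K (β ++ τ) * (vx G K w * z) = pe G K β * (pe G K τ * (vx G K w * z)) by
      rw [pe_append, mul_assoc]]
    exact ih h hτ z

/-- Incomparable paths annihilate. -/
lemma inc {w : G.V} : ∀ (β : List G.E) {γ : List G.E} {a a' u : G.V},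
    Comp G a β u → Comp G a' γ w →
    ¬(a = a' ∧ β <+: γ) → ¬(a = a' ∧ γ <+: β) →
    ∀ z : LPA K G, (vx G K u * pg G K β) * (pe G K γ * (vx G K w * z)) = 0 := by
  intro β
  induction β with
  | nil =>
    intro γ a a' u h hγ h1 h2 z
    have ha : a = u := h
    rw [pg_nil, mul_one, vx_pe hγ,
      if_neg (fun hh => h1 ⟨ha.trans hh, List.nil_prefix⟩)]
  | cons e β ih =>
    rintro γ a a' u ⟨rfl, hβ⟩ hγ h1 h2 z
    cases γ with
    | nil =>
      have ha' : a' = w := hγ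
      rw [pe_nil, one_mul, pg_cons, ← mul_assoc (vx G K u), midvx,
        if_neg (fun hh => h2 ⟨(ha'.trans hh).symm, List.nil_prefix⟩)]
    | cons f γ =>
      rw [pg_cons, pe_cons, ← mul_assoc (vx G K u), mul_assoc (ed G K f), mid]
      by_cases hef : e = f
      · subst hef
        rw [if_pos rfl, vx_pe hγ.2, if_pos rfl]
        refine ih hβ hγ.2 ?_ ?_ z
        · rintro ⟨-, hpre⟩
          exact h1 ⟨hγ.1.symm, (List.cons_prefix_cons).mpr ⟨rfl, hpre⟩⟩
        · rintro ⟨-, hpre⟩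
          exact h2 ⟨hγ.1.symm, (List.cons_prefix_cons).mpr ⟨rfl, hpre⟩⟩
      · rw [if_neg hef]

end Aux3
section Aux4
open scoped Classical
open DGraph

variable {K : Type} [Field K] {G : DGraph}

def Xset (G : DGraph) : Set G.V := {v | G.IsAcyclicVertex v}

def Yset (G : DGraph) : Set G.V :=
  {v | ∃ c : List G.E, G.IsCycle c ∧ v ∈ c.map G.src ∧ G.NoExit c}

/-- A vertex on a cycle reaches a cycle, so an acyclic vertex cannot reach `Yset`. -/
lemma no_x_reach_y {v w : G.V} (hv : v ∈ Xset G) (hw : w ∈ Yset G) (h : G.Reaches v w) :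
    False := by
  obtain ⟨c, hc, hmem, -⟩ := hw
  exact hv ⟨c, w, hc, hmem, h⟩

/-- In a cycle, the target of every edge is again a source of an edge of the cycle. -/
lemma cycle_tgt_mem {c : List G.E} (hc : G.IsCycle c) {e : G.E} (he : e ∈ c) :
    G.tgt e ∈ c.map G.src := by
  obtain ⟨hne, hchain, hclose, -⟩ := hc
  obtain ⟨i, hi⟩ := List.get_of_mem he
  by_cases hlast : (i : ℕ) + 1 < c.length
  · have := List.isChain_iff_getElem.mp hchain i (by omega)
    rw [List.get_eq_getElem] at hi
    rw [hi] at this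
    rw [this]
    exact List.mem_map.mpr ⟨c.get ⟨(i : ℕ) + 1, hlast⟩, List.get_mem _ _, rfl⟩
  · -- `e` is the last edge; use the closing condition
    have hilen : (i : ℕ) = c.length - 1 := by omega
    have hgl : c.getLast hne = e := by
      rw [List.getLast_eq_getElem, ← hi, List.get_eq_getElem]
      congr 1
      omega
    have h1 : c.getLast? = some e := by
      rw [List.getLast?_eq_getLast hne, hgl]
    have h2 : c.head? = some (c.head hne) := List.head?_eq_head hne
    rw [h1, h2] at hclose
    simp only [Option.map_some] at hclose
    have : G.tgt e = G.src (c.head hne) := by injection hclose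
    rw [this]
    exact List.mem_map.mpr ⟨c.head hne, List.head_mem hne, rfl⟩

/-- `Yset` is closed under taking targets of edges. -/
lemma y_hered_edge {w : G.V} (hw : w ∈ Yset G) {e : G.E} (he : G.src e = w) :
    G.tgt e ∈ Yset G := by
  obtain ⟨c, hc, hmem, hnx⟩ := hw
  have hec : e ∈ c := hnx e (he ▸ hmem)
  exact ⟨c, hc, cycle_tgt_mem hc hec, hnx⟩

/-- Everything reachable from `Yset` is in `Yset`. -/
lemma y_hered {w v : G.V} (hw : w ∈ Yset G) (h : G.Reaches w v) : v ∈ Yset G := by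
  induction h with
  | refl => exact hw
  | tail _ hstep ih =>
    obtain ⟨e, he1, he2⟩ := hstep
    exact he2 ▸ y_hered_edge ih he1

lemma no_y_reach_x {v w : G.V} (hv : v ∈ Xset G) (hw : w ∈ Yset G) (h : G.Reaches w v) :
    False :=
  no_x_reach_y hv (y_hered hw h) Relation.ReflTransGen.refl

/-- `Xset` is closed under taking targets of edges. -/
lemma x_hered_edge {v : G.V} (hv : v ∈ Xset G) {e : G.E} (he : G.src e = v) :
    G.tgt e ∈ Xset G := by
  rintro ⟨c, w, hc, hmem, hr⟩
  exact hv ⟨c, w, hc, hmem, Relation.ReflTransGen.head ⟨e, he, rfl⟩ hr⟩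

/-- The key annihilation: `(w δ*) (α v) = 0` for `w ∈ Yset`, `v ∈ Xset`. -/
lemma core_zero {v w : G.V} (hw : w ∈ Yset G) (hv : v ∈ Xset G) :
    ∀ (δ : List G.E) {d : G.V}, Comp G d δ w → ∀ (α : List G.E) {a : G.V}, Comp G a α v →
    ∀ z : LPA K G, (vx G K w * pg G K δ) * (pe G K α * (vx G K v * z)) = 0 := by
  intro δ
  induction δ with
  | nil =>
    intro d h α a hα z
    have hd : d = w := h
    rw [pg_nil, mul_one, vx_pe hα]
    rw [if_neg (fun hh : w = a => no_y_reach_x hv hw (comp_reaches' (hh ▸ hα)))]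
  | cons e δ ih =>
    rintro d ⟨rfl, h⟩ α a hα z
    cases α with
    | nil =>
      have ha : a = v := hα
      rw [pe_nil, one_mul, pg_cons, ← mul_assoc (vx G K w), midvx]
      rw [if_neg (fun hh : v = G.src e =>
        no_x_reach_y hv hw (comp_reaches' (show Comp G v (e :: δ) w from ⟨hh, h⟩)))]
    | cons f α =>
      rw [pg_cons, pe_cons, ← mul_assoc (vx G K w), mul_assoc (ed G K f), mid]
      by_cases hef : e = f
      · subst hef
        rw [if_pos rfl, vx_pe hα.2, if_pos rfl]
        exact ih h α hα.2 z
      · rw [if_neg hef]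

end Aux4
section Aux5
open scoped Classical
open DGraph

variable {K : Type} [Field K] {G : DGraph}

/-- The monomial `α v β*`. -/
noncomputable def mon (G : DGraph) (K : Type) [Field K] (α : List G.E) (v : G.V)
    (β : List G.E) : LPA K G :=
  pe G K α * (vx G K v * pg G K β)

/-- The set of monomials `α v β*` with `r(α) = r(β) = v ∈ H`. -/
def MH (G : DGraph) (K : Type) [Field K] (H : Set G.V) : Set (LPA K G) :=
  {x | ∃ (v : G.V) (α β : List G.E) (a b : G.V),
    v ∈ H ∧ Comp G a α v ∧ Comp G b β v ∧ x = mon G K α v β}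

/-- Product of a `Yset` monomial and an `Xset` monomial is zero. -/
lemma mon_mul_mon_zero {x y : LPA K G} (hx : x ∈ MH G K (Yset G)) (hy : y ∈ MH G K (Xset G)) :
    x * y = 0 := by
  obtain ⟨w, γ, δ, c, d, hwY, hγ, hδ, rfl⟩ := hx
  obtain ⟨v, α, β, a, b, hvX, hα, hβ, rfl⟩ := hy
  have h0 := core_zero (K := K) hwY hvX δ hδ α hα (pg G K β)
  simp only [mul_assoc] at h0
  simp only [mon, mul_assoc]
  rw [h0, mul_zero]

/-- Bilinear extension: span-level annihilation. -/
lemma span_mul_span_zero {x y : LPA K G} (hx : x ∈ Submodule.span K (MH G K (Yset G)))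
    (hy : y ∈ Submodule.span K (MH G K (Xset G))) : x * y = 0 := by
  induction hx using Submodule.span_induction with
  | mem x hxm =>
    induction hy using Submodule.span_induction with
    | mem y hym => exact mon_mul_mon_zero hxm hym
    | zero => rw [mul_zero]
    | add y z hy hz h1 h2 => rw [mul_add, h1, h2, add_zero]
    | smul r y hy h => rw [mul_smul_comm, h, smul_zero]
  | zero => rw [zero_mul]
  | add x y hx hy h1 h2 => rw [add_mul, h1, h2, add_zero]
  | smul r x hx h => rw [smul_mul_assoc, h, smul_zero]

end Aux5
section Aux6
open scoped Classical
open DGraph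

variable {K : Type} [Field K] {G : DGraph} {H : Set G.V}

lemma pg_snoc (l : List G.E) (e : G.E) : pg G K (l ++ [e]) = gh G K e * pg G K l := by
  simp [pg]

lemma vx_mul_mon {m : LPA K G} (hm : m ∈ MH G K H) (u : G.V) :
    vx G K u * m ∈ Submodule.span K (MH G K H) := by
  obtain ⟨v, α, β, a, b, hv, hα, hβ, rfl⟩ := hm
  rw [mon, vx_pe hα]
  by_cases h : u = a
  · rw [if_pos h]
    exact Submodule.subset_span ⟨v, α, β, a, b, hv, hα, hβ, rfl⟩
  · rw [if_neg h]; exact Submodule.zero_mem _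

lemma ed_mul_mon {m : LPA K G} (hm : m ∈ MH G K H) (e : G.E) :
    ed G K e * m ∈ Submodule.span K (MH G K H) := by
  obtain ⟨v, α, β, a, b, hv, hα, hβ, rfl⟩ := hm
  have habs : vx G K a * mon G K α v β = mon G K α v β := by
    rw [mon, vx_pe hα, if_pos rfl]
  rw [← habs, ← mul_assoc, ed_vx]
  by_cases h : a = G.tgt e
  · rw [if_pos h]
    have : ed G K e * mon G K α v β = mon G K (e :: α) v β := by
      simp only [mon, pe_cons, mul_assoc]
    rw [this]
    exact Submodule.subset_span
      ⟨v, e :: α, β, G.src e, b, hv, ⟨rfl, h ▸ hα⟩, hβ, rfl⟩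
  · rw [if_neg h, zero_mul]; exact Submodule.zero_mem _

lemma gh_mul_mon (hH : ∀ e : G.E, G.src e ∈ H → G.tgt e ∈ H) {m : LPA K G}
    (hm : m ∈ MH G K H) (e : G.E) :
    gh G K e * m ∈ Submodule.span K (MH G K H) := by
  obtain ⟨v, α, β, a, b, hv, hα, hβ, rfl⟩ := hm
  cases α with
  | nil =>
    have ha : a = v := hα
    rw [mon, pe_nil, one_mul, ← mul_assoc, gh_vx]
    by_cases h : v = G.src e
    · rw [if_pos h]
      have hmem : G.tgt e ∈ H := hH e (h ▸ hv)
      have : gh G K e * pg G K β = mon G K [] (G.tgt e) (β ++ [e]) := by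
        rw [mon, pe_nil, one_mul, pg_snoc, ← mul_assoc, r4]
      rw [this]
      exact Submodule.subset_span ⟨G.tgt e, [], β ++ [e], G.tgt e, b, hmem, rfl,
        comp_append hβ ⟨h, rfl⟩, rfl⟩
    · rw [if_neg h, zero_mul]; exact Submodule.zero_mem _
  | cons f α' =>
    obtain ⟨ha, hα'⟩ := hα
    have : gh G K e * mon G K (f :: α') v β =
        (gh G K e * ed G K f) * (pe G K α' * (vx G K v * pg G K β)) := by
      simp only [mon, pe_cons, mul_assoc]
    rw [this, r6]
    by_cases h : e = f
    · rw [if_pos h, h, vx_pe hα', if_pos rfl]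
      exact Submodule.subset_span ⟨v, α', β, G.tgt f, b, hv, hα', hβ, rfl⟩
    · rw [if_neg h, zero_mul]; exact Submodule.zero_mem _

lemma mon_mul_vx {m : LPA K G} (hm : m ∈ MH G K H) (u : G.V) :
    m * vx G K u ∈ Submodule.span K (MH G K H) := by
  obtain ⟨v, α, β, a, b, hv, hα, hβ, rfl⟩ := hm
  rw [mon, mul_assoc, pg_vx hβ]
  by_cases h : u = b
  · rw [if_pos h]
    exact Submodule.subset_span ⟨v, α, β, a, b, hv, hα, hβ, rfl⟩
  · rw [if_neg h, mul_zero]; exact Submodule.zero_mem _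

lemma mon_mul_gh {m : LPA K G} (hm : m ∈ MH G K H) (e : G.E) :
    m * gh G K e ∈ Submodule.span K (MH G K H) := by
  obtain ⟨v, α, β, a, b, hv, hα, hβ, rfl⟩ := hm
  have k1 : mon G K α v β * gh G K e
      = (pe G K α * ((vx G K v * pg G K β) * vx G K (G.tgt e))) * gh G K e := by
    simp only [mon, mul_assoc, r4]
  rw [k1, pg_vx hβ]
  by_cases h : G.tgt e = b
  · rw [if_pos h]
    have : (pe G K α * (vx G K v * pg G K β)) * gh G K e = mon G K α v (e :: β) := by
      simp only [mon, pg_cons, mul_assoc]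
    rw [this]
    exact Submodule.subset_span ⟨v, α, e :: β, a, G.src e, hv, hα,
      ⟨rfl, by rw [h]; exact hβ⟩, rfl⟩
  · rw [if_neg h, mul_zero, zero_mul]; exact Submodule.zero_mem _

lemma mon_mul_ed (hH : ∀ e : G.E, G.src e ∈ H → G.tgt e ∈ H) {m : LPA K G}
    (hm : m ∈ MH G K H) (f : G.E) :
    m * ed G K f ∈ Submodule.span K (MH G K H) := by
  obtain ⟨v, α, β, a, b, hv, hα, hβ, rfl⟩ := hm
  cases β with
  | nil =>
    have hb : b = v := hβ
    rw [mon, pg_nil, mul_one, mul_assoc, vx_ed]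
    by_cases h : v = G.src f
    · rw [if_pos h]
      have hmem : G.tgt f ∈ H := hH f (h ▸ hv)
      have : pe G K α * ed G K f = mon G K (α ++ [f]) (G.tgt f) [] := by
        rw [mon, pe_append, pg_nil, mul_one]
        rw [show pe G K [f] = ed G K f by simp [pe], mul_assoc,
          show ed G K f * vx G K (G.tgt f) = ed G K f from by rw [ed_vx, if_pos rfl]]
      rw [this]
      exact Submodule.subset_span ⟨G.tgt f, α ++ [f], [], a, G.tgt f, hmem,
        comp_append hα ⟨h, rfl⟩, rfl, rfl⟩
    · rw [if_neg h, mul_zero]; exact Submodule.zero_mem _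
  | cons g β' =>
    obtain ⟨hb, hβ'⟩ := hβ
    have : mon G K α v (g :: β') * ed G K f =
        pe G K α * ((vx G K v * pg G K β') * (gh G K g * ed G K f)) := by
      simp only [mon, pg_cons, mul_assoc]
    rw [this, r6]
    by_cases h : g = f
    · rw [if_pos h, pg_vx hβ', if_pos rfl]
      exact Submodule.subset_span ⟨v, α, β', a, G.tgt g, hv, hα, hβ', rfl⟩
    · rw [if_neg h, mul_zero, mul_zero]; exact Submodule.zero_mem _

end Aux6
section Aux7
open scoped Classical
open DGraph

variable {K : Type} [Field K] {G : DGraph} {H : Set G.V}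

lemma gen_mul_mem (hH : ∀ e : G.E, G.src e ∈ H → G.tgt e ∈ H) {m : LPA K G}
    (hm : m ∈ MH G K H) (g : LPAGen G) :
    RingQuot.mkRingHom (LPARel K G) (FreeAlgebra.ι K g) * m ∈ Submodule.span K (MH G K H) := by
  cases g with
  | vertex u => exact vx_mul_mon hm u
  | edge e => exact ed_mul_mon hm e
  | ghost e => exact gh_mul_mon hH hm e

lemma mem_gen_mul (hH : ∀ e : G.E, G.src e ∈ H → G.tgt e ∈ H) {m : LPA K G}
    (hm : m ∈ MH G K H) (g : LPAGen G) :
    m * RingQuot.mkRingHom (LPARel K G) (FreeAlgebra.ι K g) ∈ Submodule.span K (MH G K H) := by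
  cases g with
  | vertex u => exact mon_mul_vx hm u
  | edge e => exact mon_mul_ed hH hm e
  | ghost e => exact mon_mul_gh hm e

lemma mkAlgHom_eq_mkRingHom (z : FreeAlgebra K (LPAGen G)) :
    RingQuot.mkAlgHom K (LPARel K G) z = RingQuot.mkRingHom (LPARel K G) z := by
  rw [← RingQuot.mkAlgHom_coe K (LPARel K G)]; rfl

lemma mul_mem_left' (hH : ∀ e : G.E, G.src e ∈ H → G.tgt e ∈ H) (y : LPA K G) :
    ∀ x ∈ Submodule.span K (MH G K H), y * x ∈ Submodule.span K (MH G K H) := by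
  obtain ⟨z, rfl⟩ := RingQuot.mkAlgHom_surjective K (LPARel K G) y
  induction z using FreeAlgebra.induction with
  | grade0 r =>
    intro x hx
    rw [AlgHom.commutes, ← Algebra.smul_def]
    exact Submodule.smul_mem _ r hx
  | grade1 g =>
    intro x hx
    induction hx using Submodule.span_induction with
    | mem m hmm =>
      rw [mkAlgHom_eq_mkRingHom]
      exact gen_mul_mem hH hmm g
    | zero => rw [mul_zero]; exact Submodule.zero_mem _
    | add p q hp hq h1 h2 => rw [mul_add]; exact Submodule.add_mem _ h1 h2
    | smul r p hp h1 => rw [mul_smul_comm]; exact Submodule.smul_mem _ r h1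
  | mul p q hp hq =>
    intro x hx
    rw [map_mul, mul_assoc]
    exact hp _ (hq _ hx)
  | add p q hp hq =>
    intro x hx
    rw [map_add, add_mul]
    exact Submodule.add_mem _ (hp _ hx) (hq _ hx)

lemma mul_mem_right' (hH : ∀ e : G.E, G.src e ∈ H → G.tgt e ∈ H) (y : LPA K G) :
    ∀ x ∈ Submodule.span K (MH G K H), x * y ∈ Submodule.span K (MH G K H) := by
  obtain ⟨z, rfl⟩ := RingQuot.mkAlgHom_surjective K (LPARel K G) y
  induction z using FreeAlgebra.induction with
  | grade0 r =>
    intro x hx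
    rw [AlgHom.commutes, ← Algebra.commutes, ← Algebra.smul_def]
    exact Submodule.smul_mem _ r hx
  | grade1 g =>
    intro x hx
    induction hx using Submodule.span_induction with
    | mem m hmm =>
      rw [mkAlgHom_eq_mkRingHom]
      exact mem_gen_mul hH hmm g
    | zero => rw [zero_mul]; exact Submodule.zero_mem _
    | add p q hp hq h1 h2 => rw [add_mul]; exact Submodule.add_mem _ h1 h2
    | smul r p hp h1 => rw [smul_mul_assoc]; exact Submodule.smul_mem _ r h1
  | mul p q hp hq =>
    intro x hx
    rw [map_mul, ← mul_assoc]
    exact hq _ (hp _ hx)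
  | add p q hp hq =>
    intro x hx
    rw [map_add, mul_add]
    exact Submodule.add_mem _ (hp _ hx) (hq _ hx)

/-- The two-sided ideal generated by the vertices of a hereditary set is contained in the span
of the monomials `α v β*` with `v ∈ H`. -/
lemma tsi_span_le (hH : ∀ e : G.E, G.src e ∈ H → G.tgt e ∈ H) {x : LPA K G}
    (hx : x ∈ TwoSidedIdeal.span (lpaVtx K G '' H)) :
    x ∈ Submodule.span K (MH G K H) := by
  let I : TwoSidedIdeal (LPA K G) := TwoSidedIdeal.mk' (Submodule.span K (MH G K H))
    (Submodule.zero_mem _) (fun ha hb => Submodule.add_mem _ ha hb)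
    (fun ha => Submodule.neg_mem _ ha)
    (fun {p q} hq => mul_mem_left' hH p q hq)
    (fun {p q} hp => mul_mem_right' hH q p hp)
  have hmem : x ∈ I := by
    refine TwoSidedIdeal.mem_span_iff.mp hx I ?_
    rintro - ⟨v, hv, rfl⟩
    rw [SetLike.mem_coe, TwoSidedIdeal.mem_mk']
    exact Submodule.subset_span ⟨v, [], [], v, v, hv, rfl, rfl, by simp [mon, vx]⟩
  rwa [TwoSidedIdeal.mem_mk'] at hmem

end Aux7
section Aux8
open scoped Classical
open DGraph

variable {K : Type} [Field K] {G : DGraph}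

def endF (G : DGraph) : G.V → List G.E → G.V
  | v, [] => v
  | _, e :: l => endF G (G.tgt e) l

lemma comp_endF {a v : G.V} : ∀ {l : List G.E}, Comp G a l v → endF G a l = v := by
  intro l
  induction l generalizing a with
  | nil => intro h; exact h
  | cons e l ih => rintro ⟨rfl, h⟩; exact ih h

lemma comp_funct {a v w : G.V} {l : List G.E} (h1 : Comp G a l v) (h2 : Comp G a l w) :
    v = w := by
  rw [← comp_endF h1, ← comp_endF h2]

lemma comp_split {a w : G.V} {l l' : List G.E} (h : Comp G a (l ++ l') w) :
    ∃ u, Comp G a l u ∧ Comp G u l' w := by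
  induction l generalizing a with
  | nil => exact ⟨a, rfl, h⟩
  | cons e l ih =>
    obtain ⟨he, h2⟩ := h
    obtain ⟨u, hu1, hu2⟩ := ih h2
    exact ⟨u, ⟨he, hu1⟩, hu2⟩

/-- The key prefix product: `(β u β*) (β τ w δ*) = β τ w δ*`. -/
lemma prefix_absorb {u w a b : G.V} {β τ δ : List G.E}
    (hβ : Comp G a β u) (hτ : Comp G u τ w) (hδ : Comp G b δ w) :
    mon G K β u β * mon G K (β ++ τ) w δ = mon G K (β ++ τ) w δ := by
  have hg := gp (K := K) hβ hτ (pg G K δ)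
  calc mon G K β u β * mon G K (β ++ τ) w δ
      = pe G K β * ((vx G K u * pg G K β) *
          (pe G K β * (pe G K τ * (vx G K w * pg G K δ)))) := by
        simp only [mon, pe_append]
        simp only [mul_assoc]
    _ = pe G K β * (pe G K τ * (vx G K w * pg G K δ)) := by rw [hg]
    _ = mon G K (β ++ τ) w δ := by
        simp only [mon, pe_append]
        simp only [mul_assoc]

/-- Incomparable paths: the product of the corresponding monomials vanishes. -/
lemma incomparable_zero {u w a a' b : G.V} {β γ δ : List G.E}
    (hβ : Comp G a β u) (hγ : Comp G a' γ w) (hδ : Comp G b δ w)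
    (h1 : ¬(a = a' ∧ β <+: γ)) (h2 : ¬(a = a' ∧ γ <+: β)) :
    mon G K β u β * mon G K γ w δ = 0 := by
  have hz := inc (K := K) β hβ hγ h1 h2 (pg G K δ)
  calc mon G K β u β * mon G K γ w δ
      = pe G K β * ((vx G K u * pg G K β) * (pe G K γ * (vx G K w * pg G K δ))) := by
        simp only [mon, mul_assoc]
    _ = 0 := by rw [hz, mul_zero]

lemma local_unit {x : LPA K G} (hx : x ∈ Submodule.span K (MH G K (Yset G))) :
    ∃ e ∈ Submodule.span K (MH G K (Yset G)), e * x = x := by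
  classical
  rw [Submodule.mem_span_set] at hx
  obtain ⟨cf, hsupp, hsum⟩ := hx
  have hdata : ∀ m : cf.support, ∃ (v : G.V), ∃ (α β : List G.E), ∃ (a b : G.V),
      v ∈ Yset G ∧ Comp G a α v ∧ Comp G b β v ∧ (m : LPA K G) = mon G K α v β :=
    fun m => hsupp m.2
  choose vf αf βf af bf hY hCα hCβ hmon using hdata
  -- the finite set of (pointed) paths appearing on the left of the monomials
  set Q : Finset (G.V × List G.E) := cf.support.attach.image (fun m => (af m, αf m)) with hQ
  -- its minimal elements with respect to the prefix order
  set P₀ : Finset (G.V × List G.E) :=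
    Q.filter (fun p => ∀ q ∈ Q, (q.1 = p.1 ∧ q.2 <+: p.2) → q = p) with hP₀
  have hQprop : ∀ p ∈ Q, p.1 ∈ Set.univ ∧ True := fun p _ => ⟨trivial, trivial⟩
  -- every element of Q is a genuine path ending in Yset
  have hQpath : ∀ p ∈ Q, Comp G p.1 p.2 (endF G p.1 p.2) ∧ endF G p.1 p.2 ∈ Yset G := by
    intro p hp
    rw [hQ, Finset.mem_image] at hp
    obtain ⟨m, -, rfl⟩ := hp
    rw [comp_endF (hCα m)]
    exact ⟨hCα m, hY m⟩
  refine ⟨∑ p ∈ P₀, mon G K p.2 (endF G p.1 p.2) p.2, ?_, ?_⟩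
  · refine Submodule.sum_mem _ (fun p hp => ?_)
    have hpQ : p ∈ Q := Finset.mem_of_mem_filter p hp
    obtain ⟨hcomp, hY'⟩ := hQpath p hpQ
    exact Submodule.subset_span ⟨endF G p.1 p.2, p.2, p.2, p.1, p.1, hY', hcomp, hcomp, rfl⟩
  · -- the element acts as a left unit on x
    have hunit : ∀ m : cf.support,
        (∑ p ∈ P₀, mon G K p.2 (endF G p.1 p.2) p.2) * (m : LPA K G) = (m : LPA K G) := by
      intro t
      -- find the minimal prefix of (af t, αf t) in Q
      set R : Finset (G.V × List G.E) :=
        Q.filter (fun q => q.1 = af t ∧ q.2 <+: αf t) with hR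
      have hqt : (af t, αf t) ∈ Q := Finset.mem_image_of_mem _ (Finset.mem_attach _ t)
      have hRne : R.Nonempty := ⟨(af t, αf t), Finset.mem_filter.mpr ⟨hqt, rfl, List.prefix_rfl⟩⟩
      obtain ⟨ps, hpsR, hpsmin⟩ := R.exists_min_image (fun q => q.2.length) hRne
      obtain ⟨hpsQ, hps1, hps2⟩ := Finset.mem_filter.mp hpsR
      have hpsP₀ : ps ∈ P₀ := by
        rw [hP₀, Finset.mem_filter]
        refine ⟨hpsQ, fun q hq hle => ?_⟩
        have hqR : q ∈ R := Finset.mem_filter.mpr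
          ⟨hq, hle.1.trans hps1, hle.2.trans hps2⟩
        have hlen : ps.2.length ≤ q.2.length := hpsmin q hqR
        exact Prod.ext hle.1 (hle.2.eq_of_length (le_antisymm hle.2.length_le hlen))
      -- compute the sum
      rw [Finset.sum_mul]
      rw [Finset.sum_eq_single_of_mem ps hpsP₀ ?side]
      case side =>
        intro p hpP₀ hpne
        have hpQ : p ∈ Q := Finset.mem_of_mem_filter p hpP₀
        obtain ⟨hcomp, -⟩ := hQpath p hpQ
        have hmin := (Finset.mem_filter.mp hpP₀).2
        -- p is not a prefix of (af t, αf t)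
        have hnpre : ¬(p.1 = af t ∧ p.2 <+: αf t) := by
          rintro ⟨hp1, hp2⟩
          have hpR : p ∈ R := Finset.mem_filter.mpr ⟨hpQ, hp1, hp2⟩
          have hlen2 : ps.2.length ≤ p.2.length := hpsmin p hpR
          rcases List.prefix_or_prefix_of_prefix hps2 hp2 with hcase | hcase
          · exact hpne (hmin ps hpsQ ⟨hps1.trans hp1.symm, hcase⟩).symm
          · exact hpne (Prod.ext (hp1.trans hps1.symm)
              (hcase.eq_of_length (le_antisymm hcase.length_le hlen2)))
        have hnext : ¬(αf t <+: p.2 ∧ p.1 = af t) := by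
          rintro ⟨hp2, hp1⟩
          have := hmin (af t, αf t) hqt ⟨hp1.symm, hp2⟩
          exact hnpre ⟨hp1, this ▸ List.prefix_rfl⟩
        rw [hmon t]
        exact incomparable_zero hcomp (hCα t) (hCβ t)
          (fun hh => hnpre hh) (fun hh => hnext ⟨hh.2, hh.1⟩)
      -- main term
      obtain ⟨τ, hτ⟩ := hps2
      obtain ⟨hcomp, -⟩ := hQpath ps hpsQ
      have hsplit : Comp G ps.1 (ps.2 ++ τ) (vf t) := by
        rw [hτ, hps1]; exact hCα t
      obtain ⟨u', hu1, hu2⟩ := comp_split hsplit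
      have hu'eq : u' = endF G ps.1 ps.2 := (comp_endF hu1).symm
      rw [hmon t, ← hτ]
      rw [← hu'eq] at hcomp ⊢
      exact prefix_absorb hu1 hu2 (hCβ t)
    -- conclude
    rw [← hsum, Finsupp.mul_sum]
    refine Finsupp.sum_congr (fun m hm => ?_)
    rw [mul_smul_comm]
    congr 1
    exact hunit ⟨m, hm⟩

end Aux8
/-- In `L = L_K(E)`, the (two-sided) ideal `A` generated by the acyclic
vertices and the ideal `N` generated by the vertices on cycles without exits intersect
trivially: `A ∩ N = 0`. -/
theorem stmt12 (K : Type) [Field K] (G : DGraph) :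
    ∀ x : LPA K G,
      x ∈ TwoSidedIdeal.span (lpaVtx K G '' {v : G.V | G.IsAcyclicVertex v}) →
      x ∈ TwoSidedIdeal.span (lpaVtx K G ''
        {v : G.V | ∃ c : List G.E, G.IsCycle c ∧ v ∈ c.map G.src ∧ G.NoExit c}) →
      x = 0 := by
  intro x hA hN
  have hX : x ∈ Submodule.span K (MH G K (Xset G)) :=
    tsi_span_le (fun e he => x_hered_edge he rfl) hA
  have hY : x ∈ Submodule.span K (MH G K (Yset G)) :=
    tsi_span_le (fun e he => y_hered_edge he rfl) hN
  obtain ⟨e, heY, hex⟩ := local_unit hY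
  rw [← hex]
  exact span_mul_span_zero heY hX
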